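/- For all natural numbers a and b, the following identity of formal power series in ℤ[[q]] holds: (q;q)_∞ · Σ_{k≥0} (−1)^k q^{(3k²+k)/2 + (a+b)k} / ((q;q)_k (q;q)_{k+a} (q;q)_{k+b}) = Σ_{n≥0} (−1)^n q^{n(n+1)/2 + bn} / ((q;q)_n (q;q)_{n+a}). -/

import Mathlib

/-!
STATEMENT 1. Work in ℤ[[q]] (`PowerSeries ℤ`, with `q := PowerSeries.X`).
For `n ∈ ℕ`, `(q;q)_n = ∏_{j=1}^n (1 - q^j)`, a unit of ℤ[[q]]; `Ring.inverse`
yields its inverse.  `(q;q)_∞` is the q-adic limit of `(q;q)_n`: its `d`-th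
coefficient is the stable value `coeff d ((q;q)_d)`.  Infinite q-adic sums are
encoded coefficientwise: every family `f : ℕ → ℤ[[q]]` occurring here has the
q-order of `f n` at least `n`, so its q-adic sum is the power series whose
`d`-th coefficient is the (stabilized) finite sum `∑_{k ≤ d} coeff d (f k)`;
this is `SeriesSum f`.

The statement: for all natural numbers `a`, `b`,
`(q;q)_∞ · Σ_{k≥0} (−1)^k q^{(3k²+k)/2 + (a+b)k} / ((q;q)_k (q;q)_{k+a} (q;q)_{k+b})
   = Σ_{n≥0} (−1)^n q^{n(n+1)/2 + bn} / ((q;q)_n (q;q)_{n+a})` in ℤ[[q]].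
-/

noncomputable section
open PowerSeries

/-- `(q;q)_n = ∏_{j=1}^n (1 - q^j)`. -/
def qPoch (n : ℕ) : PowerSeries ℤ :=
  ∏ j ∈ Finset.range n, (1 - (X : PowerSeries ℤ) ^ (j + 1))

/-- `(q;q)_∞`, the q-adic limit of `(q;q)_n`. -/
def qPochInf : PowerSeries ℤ := PowerSeries.mk fun d => coeff d (qPoch d)

/-- The q-adic sum of a family of power series whose `n`-th member has q-order `≥ n`. -/
def SeriesSum (f : ℕ → PowerSeries ℤ) : PowerSeries ℤ :=
  PowerSeries.mk fun d => ∑ k ∈ Finset.range (d + 1), coeff d (f k)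

/-! ### Auxiliary development -/

/-- Shorthand for the inverse of `qPoch n`. -/
def qi (n : ℕ) : PowerSeries ℤ := Ring.inverse (qPoch n)

lemma qPoch_zero : qPoch 0 = 1 := Finset.prod_range_zero _

lemma qPoch_succ (n : ℕ) :
    qPoch (n + 1) = qPoch n * (1 - (X : PowerSeries ℤ) ^ (n + 1)) :=
  Finset.prod_range_succ _ _

lemma constCoeff_qPoch (n : ℕ) : constantCoeff (qPoch n) = 1 := by
  unfold qPoch
  rw [map_prod]
  apply Finset.prod_eq_one
  intro j _
  simp [map_pow, constantCoeff_X, zero_pow (Nat.succ_ne_zero j)]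

lemma unit_qPoch (n : ℕ) : IsUnit (qPoch n) := by
  rw [PowerSeries.isUnit_iff_constantCoeff, constCoeff_qPoch]
  exact isUnit_one

lemma qPoch_mul_qi (n : ℕ) : qPoch n * qi n = 1 :=
  Ring.mul_inverse_cancel _ (unit_qPoch n)

lemma qi_zero : qi 0 = 1 := by
  rw [qi, qPoch_zero, Ring.inverse_one]

lemma unit_one_sub (n : ℕ) : IsUnit (1 - (X : PowerSeries ℤ) ^ (n + 1)) := by
  rw [PowerSeries.isUnit_iff_constantCoeff]
  simp [map_pow, constantCoeff_X, zero_pow (Nat.succ_ne_zero n)]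

lemma qPoch_ne_zero (n : ℕ) : qPoch n ≠ 0 := (unit_qPoch n).ne_zero

/-- `(1 - q^(n+1)) / (q;q)_{n+1} = 1 / (q;q)_n`. -/
lemma qi_succ (n : ℕ) :
    (1 - (X : PowerSeries ℤ) ^ (n + 1)) * qi (n + 1) = qi n := by
  apply mul_left_cancel₀ (qPoch_ne_zero n)
  have h1 : qPoch n * ((1 - (X : PowerSeries ℤ) ^ (n + 1)) * qi (n + 1))
      = qPoch (n + 1) * qi (n + 1) := by
    rw [qPoch_succ]; ring
  rw [h1, qPoch_mul_qi, qPoch_mul_qi]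

/-- Coefficients of `X^e * g` below `e` vanish. -/
lemma coeff_X_pow_mul_of_lt {d e : ℕ} (h : d < e) (g : PowerSeries ℤ) :
    coeff d ((X : PowerSeries ℤ) ^ e * g) = 0 := by
  rw [PowerSeries.coeff_X_pow_mul', if_neg (by omega)]

lemma coeff_qPoch_stable {d m : ℕ} (h : d ≤ m) :
    coeff d (qPoch m) = coeff d (qPoch d) := by
  induction m with
  | zero => interval_cases d; rfl
  | succ m ih =>
    rcases Nat.eq_or_lt_of_le h with rfl | h'
    · rfl
    · have hd : d ≤ m := by omega
      rw [qPoch_succ, mul_sub, mul_one, map_sub, ih hd]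
      have : qPoch m * (X : PowerSeries ℤ) ^ (m + 1)
          = (X : PowerSeries ℤ) ^ (m + 1) * qPoch m := by ring
      rw [this, coeff_X_pow_mul_of_lt (by omega), sub_zero]

lemma coeff_qPochInf {d m : ℕ} (h : d ≤ m) :
    coeff d qPochInf = coeff d (qPoch m) := by
  rw [qPochInf, coeff_mk, coeff_qPoch_stable h]

lemma coeff_SeriesSum (f : ℕ → PowerSeries ℤ) (d : ℕ) :
    coeff d (SeriesSum f) = ∑ k ∈ Finset.range (d + 1), coeff d (f k) := by
  rw [SeriesSum, coeff_mk]

/-- The order condition: `f k` has q-order at least `k`. -/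
def OrdQ (f : ℕ → PowerSeries ℤ) : Prop :=
  ∀ ⦃d k : ℕ⦄, d < k → coeff d (f k) = 0

lemma coeff_SeriesSum_partial {f : ℕ → PowerSeries ℤ} (hf : OrdQ f)
    {d D : ℕ} (h : d ≤ D) :
    coeff d (SeriesSum f) = coeff d (∑ k ∈ Finset.range (D + 1), f k) := by
  rw [coeff_SeriesSum, map_sum]
  apply Finset.sum_subset (Finset.range_subset_range.mpr (by omega))
  intro k hk hnk
  exact hf (by simp only [Finset.mem_range] at hnk; omega)

lemma coeff_mul_congr {d : ℕ} {A A' B B' : PowerSeries ℤ}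
    (hA : ∀ i ≤ d, coeff i A = coeff i A')
    (hB : ∀ j ≤ d, coeff j B = coeff j B') :
    coeff d (A * B) = coeff d (A' * B') := by
  rw [coeff_mul, coeff_mul]
  apply Finset.sum_congr rfl
  intro p hp
  rw [Finset.HasAntidiagonal.mem_antidiagonal] at hp
  rw [hA p.1 (by omega), hB p.2 (by omega)]

/-- Multiplication commutes with `SeriesSum` for order-compatible families. -/
lemma SeriesSum_mul (A : PowerSeries ℤ) {f : ℕ → PowerSeries ℤ} (hf : OrdQ f) :
    A * SeriesSum f = SeriesSum fun k => A * f k := by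
  ext d
  have h1 : coeff d (A * SeriesSum f)
      = coeff d (A * ∑ k ∈ Finset.range (d + 1), f k) := by
    apply coeff_mul_congr (fun i _ => rfl)
    intro j hj
    exact coeff_SeriesSum_partial hf hj
  rw [h1, Finset.mul_sum, map_sum, coeff_SeriesSum]

/-- Diagonal reindexing of a double q-adic sum. -/
lemma SeriesSum_diag (u : ℕ → ℕ → PowerSeries ℤ)
    (hu : ∀ k j d, d < k + j → coeff d (u k j) = 0) :
    SeriesSum (fun k => SeriesSum (fun j => u k j)) =
      SeriesSum (fun n => ∑ k ∈ Finset.range (n + 1), u k (n - k)) := by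
  ext d
  rw [coeff_SeriesSum, coeff_SeriesSum]
  have hL : ∀ k, coeff d (SeriesSum fun j => u k j)
      = ∑ j ∈ Finset.range (d + 1), coeff d (u k j) := fun k => coeff_SeriesSum _ d
  simp only [hL, map_sum]
  -- LHS: sum over the square; RHS: sum over triangles
  rw [← Finset.sum_product']
  have hR : ∀ n ∈ Finset.range (d + 1),
      (∑ k ∈ Finset.range (n + 1), coeff d (u k (n - k)))
      = ∑ p ∈ Finset.HasAntidiagonal.antidiagonal n, coeff d (u p.1 p.2) := by
    intro n _
    rw [Finset.Nat.sum_antidiagonal_eq_sum_range_succ_mk]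
  rw [Finset.sum_congr rfl hR]
  have hdisj : (↑(Finset.range (d + 1)) : Set ℕ).PairwiseDisjoint
      (fun n => Finset.HasAntidiagonal.antidiagonal n) := by
    intro x _ y _ hxy
    simp only [Finset.disjoint_left]
    intro p hpx hpy
    rw [Finset.HasAntidiagonal.mem_antidiagonal] at hpx hpy
    exact hxy (hpx ▸ hpy)
  rw [← Finset.sum_biUnion hdisj]
  have hset : (Finset.range (d + 1)).biUnion (fun n => Finset.HasAntidiagonal.antidiagonal n)
      = (Finset.range (d + 1) ×ˢ Finset.range (d + 1)).filter
          (fun p => p.1 + p.2 ≤ d) := by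
    ext p
    simp only [Finset.mem_biUnion, Finset.HasAntidiagonal.mem_antidiagonal, Finset.mem_filter,
      Finset.mem_product, Finset.mem_range]
    constructor
    · rintro ⟨n, hn, rfl⟩; omega
    · rintro ⟨⟨h1, h2⟩, h3⟩; exact ⟨p.1 + p.2, by omega, rfl⟩
  rw [hset, Finset.sum_filter_of_ne]
  intro p _ hne
  by_contra hc
  exact hne (hu p.1 p.2 d (by omega))

/-! ### The key finite identity (Durfee-type) -/

lemma keyA (n : ℕ) : ∀ a : ℕ,
    (∑ k ∈ Finset.range (n + 1),
      (X : PowerSeries ℤ) ^ (k * k + a * k) * (qi k * qi (k + a) * qi (n - k)))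
    = qi n * qi (n + a) := by
  induction n with
  | zero =>
    intro a
    simp [qi_zero]
  | succ n ih =>
    intro a
    apply mul_left_cancel₀ (unit_one_sub n).ne_zero
    rw [Finset.mul_sum]
    have hterm : ∀ k ∈ Finset.range (n + 2),
        (1 - (X : PowerSeries ℤ) ^ (n + 1)) *
          ((X : PowerSeries ℤ) ^ (k * k + a * k) * (qi k * qi (k + a) * qi (n + 1 - k)))
        = (X : PowerSeries ℤ) ^ (k * k + a * k) *
            (qi k * qi (k + a) * ((1 - X ^ (n + 1 - k)) * qi (n + 1 - k)))
          + (X : PowerSeries ℤ) ^ (k * k + a * k + (n + 1 - k)) *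
            (((1 - X ^ k) * qi k) * qi (k + a) * qi (n + 1 - k)) := by
      intro k hk
      have hk' : k ≤ n + 1 := by
        simp only [Finset.mem_range] at hk; omega
      have hx : (X : PowerSeries ℤ) ^ (n + 1 - k) * X ^ k = X ^ (n + 1) := by
        rw [← pow_add, Nat.sub_add_cancel hk']
      have hsplit : (1 - (X : PowerSeries ℤ) ^ (n + 1))
          = (1 - X ^ (n + 1 - k)) + X ^ (n + 1 - k) * (1 - X ^ k) := by
        rw [mul_one_sub, hx]; ring
      rw [hsplit, add_mul, pow_add]
      ring
    rw [Finset.sum_congr rfl hterm, Finset.sum_add_distrib]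
    -- first sum
    have hA : (∑ k ∈ Finset.range (n + 2),
        (X : PowerSeries ℤ) ^ (k * k + a * k) *
          (qi k * qi (k + a) * ((1 - X ^ (n + 1 - k)) * qi (n + 1 - k))))
        = qi n * qi (n + a) := by
      rw [Finset.sum_range_succ]
      have hlast : (X : PowerSeries ℤ) ^ ((n+1) * (n+1) + a * (n+1)) *
          (qi (n+1) * qi ((n+1) + a) * ((1 - X ^ (n + 1 - (n+1))) * qi (n + 1 - (n+1))))
          = 0 := by
        rw [Nat.sub_self, pow_zero, sub_self]
        ring
      rw [hlast, add_zero, ← ih a]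
      apply Finset.sum_congr rfl
      intro k hk
      have hk' : k ≤ n := by simp only [Finset.mem_range] at hk; omega
      have h1 : n + 1 - k = (n - k) + 1 := by omega
      rw [h1, qi_succ]
    -- second sum
    have hB : (∑ k ∈ Finset.range (n + 2),
        (X : PowerSeries ℤ) ^ (k * k + a * k + (n + 1 - k)) *
          (((1 - X ^ k) * qi k) * qi (k + a) * qi (n + 1 - k)))
        = (X : PowerSeries ℤ) ^ (n + 1 + a) * (qi n * qi (n + (a + 1))) := by
      rw [Finset.sum_range_succ']
      have hzero : (X : PowerSeries ℤ) ^ (0 * 0 + a * 0 + (n + 1 - 0)) *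
          (((1 - X ^ 0) * qi 0) * qi (0 + a) * qi (n + 1 - 0)) = 0 := by
        rw [pow_zero, sub_self]
        ring
      rw [hzero, add_zero, ← ih (a + 1), Finset.mul_sum]
      apply Finset.sum_congr rfl
      intro i hi
      have hi' : i ≤ n := by simp only [Finset.mem_range] at hi; omega
      have he : (i+1) * (i+1) + a * (i+1) + (n + 1 - (i+1))
          = (n + 1 + a) + (i * i + (a + 1) * i) := by
        obtain ⟨j, rfl⟩ := Nat.exists_eq_add_of_le hi'
        rw [show (i + j) + 1 - (i + 1) = j from by omega]
        ring
      have hsub : n + 1 - (i + 1) = n - i := by omega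
      have hidx : i + 1 + a = i + (a + 1) := by omega
      rw [he, hsub, pow_add, qi_succ, hidx]
      ring
    rw [hA, hB]
    -- final reassembly
    have hgoal : qi n * qi (n + a)
        + (X : PowerSeries ℤ) ^ (n + 1 + a) * (qi n * qi (n + (a + 1)))
        = (1 - (X : PowerSeries ℤ) ^ (n + 1)) * (qi (n + 1) * qi (n + 1 + a)) := by
      have h1 : qi (n + a) = (1 - (X : PowerSeries ℤ) ^ ((n + a) + 1)) * qi ((n + a) + 1) :=
        (qi_succ (n + a)).symm
      have h2 : (n + a) + 1 = n + 1 + a := by omega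
      have h3 : n + (a + 1) = n + 1 + a := by omega
      rw [h1, h2, h3]
      have h4 : (1 - (X : PowerSeries ℤ) ^ (n + 1)) * (qi (n + 1) * qi (n + 1 + a))
          = ((1 - (X : PowerSeries ℤ) ^ (n + 1)) * qi (n + 1)) * qi (n + 1 + a) := by ring
      rw [h4, qi_succ]
      ring
    rw [hgoal]

/-! ### Euler's expansion of `(q^{m+1};q)_∞` -/

/-- The Euler series `E_m = Σ_j (-1)^j q^{j(j+1)/2 + mj} / (q;q)_j`. -/
def EE (m : ℕ) : PowerSeries ℤ :=
  SeriesSum fun j => (-1 : PowerSeries ℤ) ^ j * X ^ (j * (j + 1) / 2 + m * j) * qi j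

lemma tri_le (j : ℕ) : j ≤ j * (j + 1) / 2 := by
  have h1 : j * 2 ≤ j * (j + 1) := by
    cases j with
    | zero => simp
    | succ i => exact Nat.mul_le_mul (le_refl _) (by omega)
  calc j = j * 2 / 2 := by omega
  _ ≤ j * (j + 1) / 2 := Nat.div_le_div_right h1

lemma pent_le (k : ℕ) : k ≤ k * (3 * k + 1) / 2 := by
  have h1 : k * 2 ≤ k * (3 * k + 1) := by
    cases k with
    | zero => simp
    | succ i => exact Nat.mul_le_mul (le_refl _) (by omega)
  calc k = k * 2 / 2 := by omega
  _ ≤ k * (3 * k + 1) / 2 := Nat.div_le_div_right h1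

lemma even_pent (k : ℕ) : 2 ∣ k * (3 * k + 1) := by
  rcases Nat.even_or_odd k with h | h
  · exact Dvd.dvd.mul_right h.two_dvd _
  · refine Dvd.dvd.mul_left ?_ _
    obtain ⟨m, rfl⟩ := h
    exact ⟨3 * m + 2, by ring⟩

lemma tri_succ (i : ℕ) : (i + 1) * ((i + 1) + 1) / 2 = i * (i + 1) / 2 + (i + 1) := by
  have h : (i + 1) * ((i + 1) + 1) = i * (i + 1) + (i + 1) * 2 := by ring
  rw [h, Nat.add_mul_div_right _ _ (by norm_num : (0:ℕ) < 2)]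

lemma OrdQ_euler (m : ℕ) :
    OrdQ fun j => (-1 : PowerSeries ℤ) ^ j * X ^ (j * (j + 1) / 2 + m * j) * qi j := by
  intro d j hd
  dsimp only
  have h : (-1 : PowerSeries ℤ) ^ j * X ^ (j * (j + 1) / 2 + m * j) * qi j
      = X ^ (j * (j + 1) / 2 + m * j) * ((-1) ^ j * qi j) := by ring
  rw [h]
  exact coeff_X_pow_mul_of_lt (by have := tri_le j; omega) _

lemma EE_rec (m : ℕ) : EE m = (1 - (X : PowerSeries ℤ) ^ (m + 1)) * EE (m + 1) := by
  rw [EE, EE, SeriesSum_mul _ (OrdQ_euler (m + 1))]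
  ext d
  rw [coeff_SeriesSum, coeff_SeriesSum]
  rw [← sub_eq_zero, ← Finset.sum_sub_distrib]
  simp only [← map_sub]
  rw [← map_sum]
  -- telescoping
  set F : ℕ → PowerSeries ℤ := fun j =>
    (X : PowerSeries ℤ) ^ (m + 1) *
      ((-1 : PowerSeries ℤ) ^ j * X ^ (j * (j + 1) / 2 + (m + 1) * j) * qi j) with hF
  have hc : ∀ j, ((-1 : PowerSeries ℤ) ^ j * X ^ (j * (j + 1) / 2 + m * j) * qi j
      - (1 - X ^ (m + 1)) *
        ((-1 : PowerSeries ℤ) ^ j * X ^ (j * (j + 1) / 2 + (m + 1) * j) * qi j))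
      = F j - (if j = 0 then 0 else F (j - 1)) := by
    intro j
    cases j with
    | zero =>
      rw [if_pos rfl, sub_zero, hF]
      simp only [pow_zero, one_mul, mul_one, qi_zero, Nat.zero_mul, Nat.mul_zero,
        Nat.zero_div, Nat.add_zero, Nat.zero_add]
      ring
    | succ i =>
      rw [if_neg (Nat.succ_ne_zero i), Nat.add_sub_cancel]
      simp only [hF]
      -- goal: g_m (i+1) - (1 - X^{m+1}) g_{m+1} (i+1) = X^{m+1} g_{m+1} (i+1) - X^{m+1} g_{m+1} i
      -- equivalent to g_m (i+1) - g_{m+1} (i+1) = - X^{m+1} g_{m+1} i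
      have key : (-1 : PowerSeries ℤ) ^ (i+1) * X ^ ((i+1) * ((i+1) + 1) / 2 + m * (i+1)) * qi (i+1)
          - (-1 : PowerSeries ℤ) ^ (i+1) * X ^ ((i+1) * ((i+1) + 1) / 2 + (m+1) * (i+1)) * qi (i+1)
          = - ((X : PowerSeries ℤ) ^ (m + 1) *
              ((-1 : PowerSeries ℤ) ^ i * X ^ (i * (i + 1) / 2 + (m + 1) * i) * qi i)) := by
        have e1 : (i+1) * ((i+1) + 1) / 2 + (m+1) * (i+1)
            = ((i+1) * ((i+1) + 1) / 2 + m * (i+1)) + (i + 1) := by ring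
        have e2 : (m + 1) + (i * (i + 1) / 2 + (m + 1) * i)
            = (i+1) * ((i+1) + 1) / 2 + m * (i+1) := by
          rw [tri_succ]; ring
        have lhs_eq : (-1 : PowerSeries ℤ) ^ (i+1) * X ^ ((i+1) * ((i+1) + 1) / 2 + m * (i+1)) * qi (i+1)
            - (-1 : PowerSeries ℤ) ^ (i+1) * X ^ ((i+1) * ((i+1) + 1) / 2 + (m+1) * (i+1)) * qi (i+1)
            = (-1 : PowerSeries ℤ) ^ (i+1) * X ^ ((i+1) * ((i+1) + 1) / 2 + m * (i+1)) *
                ((1 - X ^ (i + 1)) * qi (i + 1)) := by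
          rw [e1, pow_add]; ring
        rw [lhs_eq, qi_succ, ← e2, pow_add, pow_succ]
        ring
      have expand : (-1 : PowerSeries ℤ) ^ (i+1) * X ^ ((i+1) * ((i+1) + 1) / 2 + m * (i+1)) * qi (i+1)
          - (1 - X ^ (m + 1)) *
            ((-1 : PowerSeries ℤ) ^ (i+1) * X ^ ((i+1) * ((i+1) + 1) / 2 + (m+1) * (i+1)) * qi (i+1))
          = ((-1 : PowerSeries ℤ) ^ (i+1) * X ^ ((i+1) * ((i+1) + 1) / 2 + m * (i+1)) * qi (i+1)
              - (-1 : PowerSeries ℤ) ^ (i+1) * X ^ ((i+1) * ((i+1) + 1) / 2 + (m+1) * (i+1)) * qi (i+1))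
            + (X : PowerSeries ℤ) ^ (m + 1) *
              ((-1 : PowerSeries ℤ) ^ (i+1) * X ^ ((i+1) * ((i+1) + 1) / 2 + (m+1) * (i+1)) * qi (i+1)) := by
        ring
      rw [expand, key]
      ring
  rw [Finset.sum_congr rfl (fun j _ => hc j)]
  -- telescoping sum = F d
  have htel : (∑ j ∈ Finset.range (d + 1), (F j - (if j = 0 then 0 else F (j - 1)))) = F d := by
    induction d with
    | zero => simp
    | succ d ihd =>
      rw [Finset.sum_range_succ, ihd, if_neg (Nat.succ_ne_zero d), Nat.add_sub_cancel]
      ring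
  rw [htel]
  simp only [hF]
  have : (X : PowerSeries ℤ) ^ (m + 1) *
      ((-1 : PowerSeries ℤ) ^ d * X ^ (d * (d + 1) / 2 + (m + 1) * d) * qi d)
      = X ^ ((m + 1) + (d * (d + 1) / 2 + (m + 1) * d)) * ((-1) ^ d * qi d) := by
    rw [pow_add]; ring
  rw [this]
  exact coeff_X_pow_mul_of_lt (by have := tri_le d; omega) _

lemma qPoch_mul_EE (m : ℕ) : qPoch m * EE m = qPochInf := by
  have hstep : ∀ m, qPoch m * EE m = EE 0 := by
    intro m
    induction m with
    | zero => rw [qPoch_zero, one_mul]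
    | succ m ihm =>
      rw [← ihm, EE_rec m, qPoch_succ]
      ring
  rw [hstep m]
  ext d
  -- show coeff d (EE 0) = coeff d qPochInf
  have h1 : coeff d (EE 0) = coeff d (qPoch d * EE d) := by rw [hstep d]
  have h2 : coeff d (qPoch d * EE d) = coeff d (qPoch d * 1) := by
    apply coeff_mul_congr (fun i _ => rfl)
    intro j hj
    rw [EE, coeff_SeriesSum]
    have : ∀ k ∈ Finset.range (j + 1),
        coeff j ((-1 : PowerSeries ℤ) ^ k * X ^ (k * (k + 1) / 2 + d * k) * qi k)
        = coeff j (if k = 0 then (1 : PowerSeries ℤ) else 0) := by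
      intro k hk
      cases k with
      | zero => simp [qi_zero]
      | succ i =>
        simp only [Nat.succ_ne_zero, if_neg, map_zero]
        have hrw : (-1 : PowerSeries ℤ) ^ (i+1) * X ^ ((i+1) * ((i+1) + 1) / 2 + d * (i+1)) * qi (i+1)
            = X ^ ((i+1) * ((i+1) + 1) / 2 + d * (i+1)) * ((-1) ^ (i+1) * qi (i+1)) := by ring
        rw [hrw]
        apply coeff_X_pow_mul_of_lt
        have h1 := tri_le (i + 1)
        have h2 : d ≤ d * (i + 1) := by calc d = d * 1 := (mul_one d).symm
                                        _ ≤ d * (i + 1) := Nat.mul_le_mul (le_refl d) (by omega)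
        omega
    rw [Finset.sum_congr rfl this,
      Finset.sum_eq_single 0 (fun k _ hk => by rw [if_neg hk, map_zero])
        (fun h => absurd (Finset.mem_range.mpr (by omega)) h)]
    simp
  rw [h1, h2, mul_one, coeff_qPochInf (le_refl d)]

lemma euler (m : ℕ) : qPochInf * qi m = EE m := by
  rw [← qPoch_mul_EE m]
  have : qPoch m * EE m * qi m = (qPoch m * qi m) * EE m := by ring
  rw [this, qPoch_mul_qi, one_mul]

/-! ### Exponent arithmetic -/

lemma expo (a b k j : ℕ) :
    k * (3 * k + 1) / 2 + (a + b) * k + (j * (j + 1) / 2 + (k + b) * j)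
    = ((k + j) * ((k + j) + 1) / 2 + b * (k + j)) + (k * k + a * k) := by
  have hA : 2 * (k * (3 * k + 1) / 2) = k * (3 * k + 1) :=
    Nat.mul_div_cancel' (even_pent k)
  have hB : 2 * (j * (j + 1) / 2) = j * (j + 1) :=
    Nat.mul_div_cancel' (Nat.even_mul_succ_self j).two_dvd
  have hC : 2 * ((k + j) * ((k + j) + 1) / 2) = (k + j) * ((k + j) + 1) :=
    Nat.mul_div_cancel' (Nat.even_mul_succ_self (k + j)).two_dvd
  apply Nat.eq_of_mul_eq_mul_left (show 0 < 2 by norm_num)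
  calc 2 * (k * (3 * k + 1) / 2 + (a + b) * k + (j * (j + 1) / 2 + (k + b) * j))
      = 2 * (k * (3 * k + 1) / 2) + 2 * (j * (j + 1) / 2)
        + 2 * ((a + b) * k + (k + b) * j) := by ring
    _ = k * (3 * k + 1) + j * (j + 1) + 2 * ((a + b) * k + (k + b) * j) := by
        rw [hA, hB]
    _ = (k + j) * ((k + j) + 1) + 2 * (b * (k + j) + (k * k + a * k)) := by ring
    _ = 2 * ((k + j) * ((k + j) + 1) / 2) + 2 * (b * (k + j) + (k * k + a * k)) := by
        rw [hC]
    _ = 2 * (((k + j) * ((k + j) + 1) / 2 + b * (k + j)) + (k * k + a * k)) := by ring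

/-! ### Main theorem -/

theorem stmt1 (a b : ℕ) :
    qPochInf *
      SeriesSum (fun k => (-1 : PowerSeries ℤ) ^ k *
        X ^ (k * (3 * k + 1) / 2 + (a + b) * k) *
        Ring.inverse (qPoch k * qPoch (k + a) * qPoch (k + b)))
    = SeriesSum (fun n => (-1 : PowerSeries ℤ) ^ n *
        X ^ (n * (n + 1) / 2 + b * n) *
        Ring.inverse (qPoch n * qPoch (n + a))) := by
  -- rewrite inverses of products
  have hinv3 : ∀ k, Ring.inverse (qPoch k * qPoch (k + a) * qPoch (k + b))
      = qi k * qi (k + a) * qi (k + b) := by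
    intro k
    rw [Ring.mul_inverse_rev, Ring.mul_inverse_rev, qi, qi, qi]
    ring
  have hinv2 : ∀ n, Ring.inverse (qPoch n * qPoch (n + a))
      = qi n * qi (n + a) := by
    intro n
    rw [Ring.mul_inverse_rev, qi, qi]
    ring
  simp only [hinv3, hinv2]
  -- the left family
  set f : ℕ → PowerSeries ℤ := fun k => (-1 : PowerSeries ℤ) ^ k *
    X ^ (k * (3 * k + 1) / 2 + (a + b) * k) * (qi k * qi (k + a) * qi (k + b)) with hf
  have hOrdf : OrdQ f := by
    intro d k hd
    have h : f k = X ^ (k * (3 * k + 1) / 2 + (a + b) * k) *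
        ((-1 : PowerSeries ℤ) ^ k * (qi k * qi (k + a) * qi (k + b))) := by
      rw [hf]; ring
    rw [h]
    exact coeff_X_pow_mul_of_lt (by have := pent_le k; omega) _
  rw [SeriesSum_mul _ hOrdf]
  -- substitute Euler's expansion
  have hstep1 : (fun k => qPochInf * f k)
      = fun k => SeriesSum (fun j =>
          (-1 : PowerSeries ℤ) ^ (k + j) *
            X ^ ((k * (3 * k + 1) / 2 + (a + b) * k) + (j * (j + 1) / 2 + (k + b) * j)) *
            (qi k * qi (k + a) * qi j)) := by
    funext k
    have h1 : qPochInf * f k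
        = ((-1 : PowerSeries ℤ) ^ k * X ^ (k * (3 * k + 1) / 2 + (a + b) * k) *
            (qi k * qi (k + a))) * (qPochInf * qi (k + b)) := by
      rw [hf]; ring
    rw [h1, euler (k + b), EE, SeriesSum_mul _ (OrdQ_euler (k + b))]
    refine congrArg SeriesSum (funext fun j => ?_)
    rw [pow_add ((-1 : PowerSeries ℤ)) k j,
      pow_add (X : PowerSeries ℤ) (k * (3 * k + 1) / 2 + (a + b) * k)
        (j * (j + 1) / 2 + (k + b) * j)]
    ring
  rw [hstep1]
  -- diagonal reindexing
  rw [SeriesSum_diag _ (by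
    intro k j d hd
    have h : (-1 : PowerSeries ℤ) ^ (k + j) *
        X ^ ((k * (3 * k + 1) / 2 + (a + b) * k) + (j * (j + 1) / 2 + (k + b) * j)) *
        (qi k * qi (k + a) * qi j)
        = X ^ ((k * (3 * k + 1) / 2 + (a + b) * k) + (j * (j + 1) / 2 + (k + b) * j)) *
          ((-1 : PowerSeries ℤ) ^ (k + j) * (qi k * qi (k + a) * qi j)) := by ring
    rw [h]
    apply coeff_X_pow_mul_of_lt _
    have h1 := pent_le k
    have h2 := tri_le j
    omega)]
  -- evaluate the diagonal sums via the key identity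
  refine congrArg SeriesSum (funext fun n => ?_)
  have hdiag : ∀ k ∈ Finset.range (n + 1),
      (-1 : PowerSeries ℤ) ^ (k + (n - k)) *
        X ^ ((k * (3 * k + 1) / 2 + (a + b) * k)
          + ((n - k) * ((n - k) + 1) / 2 + (k + b) * (n - k))) *
        (qi k * qi (k + a) * qi (n - k))
      = (-1 : PowerSeries ℤ) ^ n * X ^ (n * (n + 1) / 2 + b * n) *
          (X ^ (k * k + a * k) * (qi k * qi (k + a) * qi (n - k))) := by
    intro k hk
    have hk' : k ≤ n := by simp only [Finset.mem_range] at hk; omega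
    have hkn : k + (n - k) = n := by omega
    have hexp := expo a b k (n - k)
    rw [hkn] at hexp
    rw [hkn, hexp, pow_add]
    ring
  rw [Finset.sum_congr rfl hdiag, ← Finset.mul_sum, keyA n a]
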